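/- A continuous linear functional T : L¹([0,1];ℝ) → ℝ satisfies T(𝟙) = 1 and T(γ(f,g)) = (T(f) + T(g))/2 for all f, g ∈ L¹([0,1];ℝ) if and only if T(f) = ∫_{[0,1]} f for all f ∈ L¹([0,1];ℝ). In particular, the Lebesgue integral is the unique continuous linear functional on L¹([0,1];ℝ) with these two properties. -/

import Mathlib

open MeasureTheory

/-- Lebesgue measure restricted to `[0,1]`. -/
noncomputable def μ01 : Measure ℝ := volume.restrict (Set.Icc 0 1)

/-- The space `L¹([0,1]; ℝ)`. -/
abbrev L1 : Type := Lp ℝ 1 μ01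

/-- `γ : L1 → L1 → L1` is the juxtaposition operation: `γ f g` agrees a.e. with
`x ↦ f (2x)` on `[0, 1/2)` and with `x ↦ g (2x − 1)` on `[1/2, 1]`. -/
def IsJux (γ : L1 → L1 → L1) : Prop :=
  ∀ f g : L1,
    (∀ᵐ x ∂μ01, x ∈ Set.Ico (0 : ℝ) (1 / 2) → γ f g x = f (2 * x)) ∧
    (∀ᵐ x ∂μ01, x ∈ Set.Icc (1 / 2 : ℝ) 1 → γ f g x = g (2 * x - 1))

/-- `one : L1` is the class of the constant function `1`. -/
def IsOne (one : L1) : Prop := (one : ℝ → ℝ) =ᵐ[μ01] fun _ => (1 : ℝ)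

namespace Aux11

lemma μ01_def : μ01 = volume.restrict (Set.Icc 0 1) := rfl

lemma μ01_apply (s : Set ℝ) : μ01 s = volume (s ∩ Set.Icc 0 1) :=
  Measure.restrict_apply' measurableSet_Icc

lemma μ01_le (s : Set ℝ) : μ01 s ≤ volume s :=
  Measure.le_iff'.mp Measure.restrict_le_self s

instance : IsFiniteMeasure μ01 := by
  constructor
  rw [μ01_def, Measure.restrict_apply_univ, Real.volume_Icc]
  simp

lemma μ01_univ : μ01 Set.univ = 1 := by
  rw [μ01_def, Measure.restrict_apply_univ, Real.volume_Icc]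
  norm_num

/-- indicator of a measurable set as an element of L1 -/
noncomputable def ι (s : Set ℝ) (hs : MeasurableSet s) : L1 :=
  indicatorConstLp 1 hs (measure_ne_top μ01 s) (1 : ℝ)

lemma ι_coe {s : Set ℝ} (hs : MeasurableSet s) :
    ⇑(ι s hs) =ᵐ[μ01] s.indicator (fun _ => (1 : ℝ)) := indicatorConstLp_coeFn

lemma ι_congr {s t : Set ℝ} (hs : MeasurableSet s) (ht : MeasurableSet t)
    (h : s =ᵐ[μ01] t) : ι s hs = ι t ht :=
  (indicatorConstLp_inj hs _ ht _ one_ne_zero).mpr h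

lemma ι_union {s t : Set ℝ} (hs : MeasurableSet s) (ht : MeasurableSet t)
    (hst : Disjoint s t) : ι (s ∪ t) (hs.union ht) = ι s hs + ι t ht :=
  indicatorConstLp_disjoint_union hs ht _ _ hst 1

lemma ι_empty (hs : MeasurableSet (∅ : Set ℝ)) : ι ∅ hs = 0 := by
  apply Lp.ext (μ := μ01)
  refine (ι_coe hs).trans ?_
  rw [Set.indicator_empty']
  exact (Lp.coeFn_zero ℝ 1 μ01).symm

lemma ι_univ {one : L1} (hone : IsOne one) : ι Set.univ MeasurableSet.univ = one := by
  apply Lp.ext (μ := μ01)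
  refine (ι_coe _).trans ?_
  rw [Set.indicator_univ]
  exact hone.symm

lemma null_preimage_left {N : Set ℝ} (hN : μ01 N = 0) :
    μ01 {x | x ∈ Set.Ico (0 : ℝ) (1 / 2) ∧ 2 * x ∈ N} = 0 := by
  have h1 : volume (N ∩ Set.Icc 0 1) = 0 := by rwa [← μ01_apply]
  have h2 : volume (((2 : ℝ) * ·) ⁻¹' (N ∩ Set.Icc 0 1)) = 0 := by
    rw [Real.volume_preimage_mul_left two_ne_zero, h1, mul_zero]
  refine le_antisymm ((μ01_le _).trans ((measure_mono ?_).trans h2.le)) (zero_le)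
  rintro x ⟨⟨hx0, hx1⟩, hxN⟩
  exact ⟨hxN, show (0:ℝ) ≤ 2 * x by linarith, show (2:ℝ) * x ≤ 1 by linarith⟩

lemma null_preimage_right {N : Set ℝ} (hN : μ01 N = 0) :
    μ01 {x | x ∈ Set.Icc (1 / 2 : ℝ) 1 ∧ 2 * x - 1 ∈ N} = 0 := by
  have h1 : volume (N ∩ Set.Icc 0 1) = 0 := by rwa [← μ01_apply]
  have key : volume ((fun x : ℝ => 2 * x - 1) ⁻¹' (N ∩ Set.Icc 0 1)) = 0 := by
    have he : (fun x : ℝ => 2 * x - 1) ⁻¹' (N ∩ Set.Icc 0 1)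
        = ((2 : ℝ) * ·) ⁻¹' ((fun h : ℝ => h + (-1)) ⁻¹' (N ∩ Set.Icc 0 1)) := by
      ext x
      simp only [Set.mem_preimage, sub_eq_add_neg]
    rw [he, Real.volume_preimage_mul_left two_ne_zero,
      measure_preimage_add_right volume (-1) _, h1, mul_zero]
  refine le_antisymm ((μ01_le _).trans ((measure_mono ?_).trans key.le)) (zero_le)
  rintro x ⟨⟨hx0, hx1⟩, hxN⟩
  exact ⟨hxN, show (0:ℝ) ≤ 2 * x - 1 by linarith, show (2:ℝ) * x - 1 ≤ 1 by linarith⟩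

lemma ae_comp_left {u v : ℝ → ℝ} (huv : u =ᵐ[μ01] v) :
    ∀ᵐ x ∂μ01, x ∈ Set.Ico (0 : ℝ) (1 / 2) → u (2 * x) = v (2 * x) := by
  rw [ae_iff]
  refine measure_mono_null ?_ (null_preimage_left (ae_iff.mp huv))
  intro x hx
  rw [Set.mem_setOf_eq, Classical.not_imp] at hx
  exact ⟨hx.1, hx.2⟩

lemma ae_comp_right {u v : ℝ → ℝ} (huv : u =ᵐ[μ01] v) :
    ∀ᵐ x ∂μ01, x ∈ Set.Icc (1 / 2 : ℝ) 1 → u (2 * x - 1) = v (2 * x - 1) := by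
  rw [ae_iff]
  refine measure_mono_null ?_ (null_preimage_right (ae_iff.mp huv))
  intro x hx
  rw [Set.mem_setOf_eq, Classical.not_imp] at hx
  exact ⟨hx.1, hx.2⟩

lemma ae_mem_Icc : ∀ᵐ x ∂μ01, x ∈ Set.Icc (0 : ℝ) 1 := by
  rw [μ01_def]
  exact ae_restrict_mem measurableSet_Icc

lemma ae_mem_Ico01 : ∀ᵐ x ∂μ01, x ∈ Set.Ico (0 : ℝ) 1 := by
  rw [ae_iff]
  have hsub : {x : ℝ | ¬x ∈ Set.Ico (0 : ℝ) 1} ∩ Set.Icc 0 1 ⊆ {1} := by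
    rintro x ⟨hx, h0, h1⟩
    simp only [Set.mem_Ico, not_and, not_lt, Set.mem_setOf_eq] at hx
    have := hx h0
    simp [le_antisymm h1 this]
  rw [μ01_apply]
  exact measure_mono_null hsub Real.volume_singleton

lemma gamma_eq {γ : L1 → L1 → L1} (hγ : IsJux γ) (f g h : L1)
    (h1 : ∀ᵐ x ∂μ01, x ∈ Set.Ico (0 : ℝ) (1 / 2) → h x = f (2 * x))
    (h2 : ∀ᵐ x ∂μ01, x ∈ Set.Icc (1 / 2 : ℝ) 1 → h x = g (2 * x - 1)) :
    γ f g = h := by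
  obtain ⟨hg1, hg2⟩ := hγ f g
  apply Lp.ext (μ := μ01)
  filter_upwards [hg1, hg2, h1, h2, ae_mem_Icc] with x e1 e2 e3 e4 hx
  rcases lt_or_ge x (1 / 2 : ℝ) with hlt | hle
  · rw [e1 ⟨hx.1, hlt⟩, e3 ⟨hx.1, hlt⟩]
  · rw [e2 ⟨hle, hx.2⟩, e4 ⟨hle, hx.2⟩]

end Aux11
namespace Aux11

noncomputable def ιI (a b : ℝ) : L1 := ι (Set.Ico a b) measurableSet_Ico

lemma gamma_left {γ : L1 → L1 → L1} (hγ : IsJux γ) (a b : ℝ) (hb : b ≤ 1) :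
    γ (ιI a b) 0 = ιI (a / 2) (b / 2) := by
  apply gamma_eq hγ
  · filter_upwards [ae_comp_left (ι_coe (measurableSet_Ico : MeasurableSet (Set.Ico a b))),
      ι_coe (measurableSet_Ico : MeasurableSet (Set.Ico (a/2) (b/2)))] with x h1 h2 hx
    rw [show ((ιI (a/2) (b/2)) : ℝ → ℝ) x = (ι (Set.Ico (a/2) (b/2)) measurableSet_Ico : ℝ → ℝ) x from rfl,
      h2, show ((ιI a b) : ℝ → ℝ) (2*x) = (ι (Set.Ico a b) measurableSet_Ico : ℝ → ℝ) (2*x) from rfl,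
      h1 hx]
    have hiff : x ∈ Set.Ico (a/2) (b/2) ↔ 2 * x ∈ Set.Ico a b := by
      simp only [Set.mem_Ico]
      constructor <;> rintro ⟨u, v⟩ <;> constructor <;> linarith
    by_cases hm : x ∈ Set.Ico (a/2) (b/2)
    · rw [Set.indicator_of_mem hm, Set.indicator_of_mem (hiff.mp hm)]
    · rw [Set.indicator_of_notMem hm, Set.indicator_of_notMem (fun hc => hm (hiff.mpr hc))]
  · filter_upwards [ae_comp_right (Lp.coeFn_zero ℝ 1 μ01),
      ι_coe (measurableSet_Ico : MeasurableSet (Set.Ico (a/2) (b/2)))] with x h1 h2 hx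
    rw [show ((ιI (a/2) (b/2)) : ℝ → ℝ) x = (ι (Set.Ico (a/2) (b/2)) measurableSet_Ico : ℝ → ℝ) x from rfl,
      h2, h1 hx]
    have : x ∉ Set.Ico (a/2) (b/2) := by
      rintro ⟨u, v⟩
      have := hx.1
      linarith
    rw [Set.indicator_of_notMem this]
    rfl

lemma gamma_right {γ : L1 → L1 → L1} (hγ : IsJux γ) (a b : ℝ) (ha : 0 ≤ a) :
    γ 0 (ιI a b) = ιI ((a + 1) / 2) ((b + 1) / 2) := by
  apply gamma_eq hγ
  · filter_upwards [ae_comp_left (Lp.coeFn_zero ℝ 1 μ01),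
      ι_coe (measurableSet_Ico : MeasurableSet (Set.Ico ((a+1)/2) ((b+1)/2)))] with x h1 h2 hx
    rw [show ((ιI ((a+1)/2) ((b+1)/2)) : ℝ → ℝ) x = (ι (Set.Ico ((a+1)/2) ((b+1)/2)) measurableSet_Ico : ℝ → ℝ) x from rfl,
      h2, h1 hx]
    have : x ∉ Set.Ico ((a+1)/2) ((b+1)/2) := by
      rintro ⟨u, v⟩
      have := hx.2
      linarith
    rw [Set.indicator_of_notMem this]
    rfl
  · filter_upwards [ae_comp_right (ι_coe (measurableSet_Ico : MeasurableSet (Set.Ico a b))),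
      ι_coe (measurableSet_Ico : MeasurableSet (Set.Ico ((a+1)/2) ((b+1)/2)))] with x h1 h2 hx
    rw [show ((ιI ((a+1)/2) ((b+1)/2)) : ℝ → ℝ) x = (ι (Set.Ico ((a+1)/2) ((b+1)/2)) measurableSet_Ico : ℝ → ℝ) x from rfl,
      h2, show ((ιI a b) : ℝ → ℝ) (2*x-1) = (ι (Set.Ico a b) measurableSet_Ico : ℝ → ℝ) (2*x-1) from rfl,
      h1 hx]
    have hiff : x ∈ Set.Ico ((a+1)/2) ((b+1)/2) ↔ 2 * x - 1 ∈ Set.Ico a b := by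
      simp only [Set.mem_Ico]
      constructor <;> rintro ⟨u, v⟩ <;> constructor <;> linarith
    by_cases hm : x ∈ Set.Ico ((a+1)/2) ((b+1)/2)
    · rw [Set.indicator_of_mem hm, Set.indicator_of_mem (hiff.mp hm)]
    · rw [Set.indicator_of_notMem hm, Set.indicator_of_notMem (fun hc => hm (hiff.mpr hc))]

lemma ιI_zero_one {one : L1} (hone : IsOne one) : ιI 0 1 = one := by
  apply Lp.ext (μ := μ01)
  refine (ι_coe _).trans ?_
  have h2 : (fun _ : ℝ => (1:ℝ)) =ᵐ[μ01] ⇑one := hone.symm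
  refine Filter.EventuallyEq.trans ?_ h2
  filter_upwards [ae_mem_Ico01] with x hx
  rw [Set.indicator_of_mem hx]

lemma ιI_self (a : ℝ) : ιI a a = 0 := by
  rw [ιI, ι_congr measurableSet_Ico MeasurableSet.empty (by rw [Set.Ico_self]; exact Filter.EventuallyEq.rfl)]
  exact ι_empty _

lemma ιI_add {a b c : ℝ} (hab : a ≤ b) (hbc : b ≤ c) : ιI a c = ιI a b + ιI b c := by
  rw [ιI, ιI, ιI, ← ι_union measurableSet_Ico measurableSet_Ico (Set.disjoint_left.mpr fun x hx hx' => absurd hx.2 (not_lt.mpr hx'.1))]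
  exact ι_congr _ _ (by rw [Set.Ico_union_Ico_eq_Ico hab hbc]; exact Filter.EventuallyEq.rfl)

lemma norm_ιI {a b : ℝ} (h0 : 0 ≤ a) (hab : a ≤ b) (hb : b ≤ 1) : ‖ιI a b‖ = b - a := by
  rw [ιI, ι, norm_indicatorConstLp one_ne_zero ENNReal.one_ne_top]
  rw [measureReal_def, μ01_apply, Set.inter_eq_left.mpr (fun x hx => Set.mem_Icc.mpr ⟨le_trans h0 hx.1, le_of_lt (lt_of_lt_of_le hx.2 hb)⟩)]
  rw [Real.volume_Ico, ENNReal.toReal_ofReal (by linarith)]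
  norm_num

end Aux11
namespace Aux11

variable {γ : L1 → L1 → L1} {one : L1} {T : L1 →L[ℝ] ℝ}

lemma T_dyadic (hγ : IsJux γ) (hone : IsOne one) (hT1 : T one = 1)
    (hT2 : ∀ f g : L1, T (γ f g) = (T f + T g) / 2) :
    ∀ n k : ℕ, k < 2 ^ n → T (ιI ((k : ℝ) / 2 ^ n) (((k : ℝ) + 1) / 2 ^ n)) = 1 / 2 ^ n := by
  intro n
  induction n with
  | zero =>
    intro k hk
    interval_cases k
    simp only [pow_zero, Nat.cast_zero, zero_div, div_one, zero_add]
    rw [ιI_zero_one hone, hT1]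
  | succ n ih =>
    intro k hk
    rcases lt_or_ge k (2 ^ n) with h | h
    · have e1 : ((k : ℝ) / 2 ^ n) / 2 = (k : ℝ) / 2 ^ (n + 1) := by
        rw [div_div, ← pow_succ]
      have e2 : (((k : ℝ) + 1) / 2 ^ n) / 2 = ((k : ℝ) + 1) / 2 ^ (n + 1) := by
        rw [div_div, ← pow_succ]
      have hb : ((k : ℝ) + 1) / 2 ^ n ≤ 1 := by
        rw [div_le_one (by positivity)]
        have : ((k : ℝ) + 1) ≤ ((2 ^ n : ℕ) : ℝ) := by
          exact_mod_cast Nat.succ_le_of_lt h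
        simpa using this
      have hg := gamma_left hγ ((k : ℝ) / 2 ^ n) (((k : ℝ) + 1) / 2 ^ n) hb
      rw [e1, e2] at hg
      rw [← hg, hT2, map_zero, ih k h, pow_succ]
      ring
    · obtain ⟨j, rfl⟩ : ∃ j, k = j + 2 ^ n := ⟨k - 2 ^ n, (Nat.sub_add_cancel h).symm⟩
      have hj : j < 2 ^ n := by
        have : (2:ℕ) ^ (n + 1) = 2 ^ n + 2 ^ n := by ring
        omega
      have ha : (0 : ℝ) ≤ (j : ℝ) / 2 ^ n := by positivity
      have hg := gamma_right hγ ((j : ℝ) / 2 ^ n) (((j : ℝ) + 1) / 2 ^ n) ha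
      have e1 : ((j : ℝ) / 2 ^ n + 1) / 2 = ((j : ℝ) + 2 ^ n) / 2 ^ (n + 1) := by
        rw [pow_succ]
        field_simp
        all_goals ring
      have e2 : (((j : ℝ) + 1) / 2 ^ n + 1) / 2 = (((j : ℝ) + 2 ^ n) + 1) / 2 ^ (n + 1) := by
        rw [pow_succ]
        field_simp
        all_goals ring
      rw [e1, e2] at hg
      have ecast : ((j + 2 ^ n : ℕ) : ℝ) = (j : ℝ) + 2 ^ n := by push_cast; ring
      rw [ecast, ← hg, hT2, map_zero, ih j hj, pow_succ]
      ring

lemma T_initial (hγ : IsJux γ) (hone : IsOne one) (hT1 : T one = 1)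
    (hT2 : ∀ f g : L1, T (γ f g) = (T f + T g) / 2) :
    ∀ n k : ℕ, k ≤ 2 ^ n → T (ιI 0 ((k : ℝ) / 2 ^ n)) = (k : ℝ) / 2 ^ n := by
  intro n k
  induction k with
  | zero =>
    intro _
    simp only [Nat.cast_zero, zero_div]
    rw [ιI_self, map_zero]
  | succ k ih =>
    intro hk
    have hk' : k ≤ 2 ^ n := le_of_lt (Nat.lt_of_succ_le hk)
    have hkk : k < 2 ^ n := Nat.lt_of_succ_le hk
    have h1 : (0:ℝ) ≤ (k : ℝ) / 2 ^ n := by positivity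
    have h2 : (k : ℝ) / 2 ^ n ≤ ((k : ℝ) + 1) / 2 ^ n := by
      apply div_le_div_of_nonneg_right ?_ (by positivity)
      linarith
    have ecast : ((k + 1 : ℕ) : ℝ) = (k : ℝ) + 1 := by push_cast; ring
    rw [ecast, ιI_add h1 h2, map_add, ih hk', T_dyadic hγ hone hT1 hT2 n k hkk]
    ring

lemma T_Ico (hγ : IsJux γ) (hone : IsOne one) (hT1 : T one = 1)
    (hT2 : ∀ f g : L1, T (γ f g) = (T f + T g) / 2)
    {q : ℝ} (hq0 : 0 ≤ q) (hq1 : q ≤ 1) : T (ιI 0 q) = q := by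
  have key : ∀ n : ℕ, |T (ιI 0 q) - q| ≤ (‖T‖ + 1) * (1 / 2) ^ n := by
    intro n
    set k : ℕ := ⌊q * 2 ^ n⌋₊ with hkdef
    have hfl : (k : ℝ) ≤ q * 2 ^ n := Nat.floor_le (by positivity)
    have hfl2 : q * 2 ^ n < (k : ℝ) + 1 := Nat.lt_floor_add_one _
    have hk2 : k ≤ 2 ^ n := by
      have : (k : ℝ) ≤ ((2 ^ n : ℕ) : ℝ) := by
        push_cast
        nlinarith [hfl, hq1, pow_nonneg (by norm_num : (0:ℝ) ≤ 2) n]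
      exact_mod_cast this
    set a : ℝ := (k : ℝ) / 2 ^ n with hadef
    have ha0 : 0 ≤ a := by positivity
    have haq : a ≤ q := by
      rw [hadef, div_le_iff₀ (by positivity)]
      linarith
    have h2n : (0:ℝ) < 2 ^ n := by positivity
    have haq2 : q - a ≤ (1/2) ^ n := by
      have hmul : (q - a) * 2 ^ n ≤ 1 := by
        rw [hadef]
        field_simp
        linarith
      rw [div_pow, one_pow]
      exact (le_div_iff₀ h2n).mpr hmul
    have hTa : T (ιI 0 a) = a := T_initial hγ hone hT1 hT2 n k hk2
    have hsplit : ιI 0 q = ιI 0 a + ιI a q := ιI_add ha0 haq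
    have hnorm : ‖ιI a q‖ = q - a := norm_ιI ha0 haq hq1
    have hTaq : |T (ιI a q)| ≤ ‖T‖ * (q - a) := by
      calc |T (ιI a q)| ≤ ‖T‖ * ‖ιI a q‖ := T.le_opNorm _
      _ = ‖T‖ * (q - a) := by rw [hnorm]
    have : T (ιI 0 q) - q = T (ιI a q) + (a - q) := by
      rw [hsplit, map_add, hTa]
      ring
    rw [this]
    calc |T (ιI a q) + (a - q)| ≤ |T (ιI a q)| + |a - q| := abs_add_le _ _
    _ ≤ ‖T‖ * (q - a) + (q - a) := by
        rw [abs_sub_comm, abs_of_nonneg (show (0:ℝ) ≤ q - a by linarith)]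
        linarith
    _ ≤ (‖T‖ + 1) * (1/2) ^ n := by
        have h2 : (0:ℝ) ≤ q - a := by linarith
        nlinarith [norm_nonneg T, haq2]
  have htend : Filter.Tendsto (fun n : ℕ => (‖T‖ + 1) * (1 / 2 : ℝ) ^ n) Filter.atTop (nhds 0) := by
    have := tendsto_pow_atTop_nhds_zero_of_lt_one (by norm_num : (0:ℝ) ≤ 1/2) (by norm_num : (1/2:ℝ) < 1)
    simpa using this.const_mul (‖T‖ + 1)
  have habs : |T (ιI 0 q) - q| ≤ 0 := ge_of_tendsto' htend key
  have : T (ιI 0 q) - q = 0 := abs_eq_zero.mp (le_antisymm habs (abs_nonneg _))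
  linarith

end Aux11
namespace Aux11

open scoped symmDiff

lemma ι_compl {t : Set ℝ} (ht : MeasurableSet t) :
    ι tᶜ ht.compl = ι Set.univ MeasurableSet.univ - ι t ht := by
  apply Lp.ext (μ := μ01)
  filter_upwards [Lp.coeFn_sub (ι Set.univ MeasurableSet.univ) (ι t ht),
    ι_coe ht.compl, ι_coe (MeasurableSet.univ : MeasurableSet (Set.univ : Set ℝ)), ι_coe ht]
    with x e0 e1 e2 e3
  rw [e1, e0, Pi.sub_apply, e2, e3, Set.indicator_univ]
  by_cases hx : x ∈ t
  · rw [Set.indicator_of_notMem (by simpa using hx), Set.indicator_of_mem hx]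
    norm_num
  · rw [Set.indicator_of_mem (by simpa using hx), Set.indicator_of_notMem hx]
    norm_num

variable {γ : L1 → L1 → L1} {one : L1} {T : L1 →L[ℝ] ℝ}

lemma T_meas (hγ : IsJux γ) (hone : IsOne one) (hT1 : T one = 1)
    (hT2 : ∀ f g : L1, T (γ f g) = (T f + T g) / 2) :
    ∀ s : Set ℝ, MeasurableSet s → ∀ (hs : MeasurableSet s), T (ι s hs) = (μ01 s).toReal := by
  have h_eq : (inferInstance : MeasurableSpace ℝ)
      = MeasurableSpace.generateFrom (⋃ a : ℚ, {Set.Iio (a : ℝ)}) :=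
    BorelSpace.measurable_eq.trans Real.borel_eq_generateFrom_Iio_rat
  have h_inter : IsPiSystem (⋃ a : ℚ, {Set.Iio (a : ℝ)}) := by
    rintro s hs t ht -
    simp only [Set.mem_iUnion, Set.mem_singleton_iff] at *
    obtain ⟨p, rfl⟩ := hs
    obtain ⟨q, rfl⟩ := ht
    refine ⟨min p q, ?_⟩
    rw [Set.Iio_inter_Iio]
    push_cast
    rfl
  refine MeasurableSpace.induction_on_inter h_eq h_inter ?_ ?_ ?_ ?_
  · -- empty
    intro hs
    rw [ι_empty, map_zero]
    simp
  · -- basic : Iio q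
    rintro t ht hmeas
    simp only [Set.mem_iUnion, Set.mem_singleton_iff] at ht
    obtain ⟨q, rfl⟩ := ht
    set q' : ℝ := max 0 (min (q : ℝ) 1) with hq'def
    have hq'0 : 0 ≤ q' := le_max_left _ _
    have hq'1 : q' ≤ 1 := max_le zero_le_one (min_le_right _ _)
    have haeeq : (Set.Iio (q : ℝ) : Set ℝ) =ᵐ[μ01] Set.Ico 0 q' := by
      filter_upwards [ae_mem_Ico01] with x hx
      simp only [eq_iff_iff, Set.mem_Iio, Set.mem_Ico]
      constructor
      · intro hxq
        exact ⟨hx.1, lt_of_lt_of_le (lt_min hxq hx.2) (le_max_right _ _)⟩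
      · rintro ⟨-, hlt⟩
        rcases le_or_gt (min (q : ℝ) 1) 0 with hm | hm
        · rw [hq'def, max_eq_left hm] at hlt
          exact absurd hx.1 (not_le.mpr hlt)
        · rw [hq'def, max_eq_right hm.le] at hlt
          exact hlt.trans_le (min_le_left _ _)
    have hmeasval : μ01 (Set.Iio (q : ℝ)) = ENNReal.ofReal q' := by
      rw [measure_congr haeeq, μ01_apply,
        Set.inter_eq_left.mpr (fun x hx => Set.mem_Icc.mpr
          ⟨hx.1, le_of_lt (lt_of_lt_of_le hx.2 hq'1)⟩), Real.volume_Ico]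
      norm_num
    rw [ι_congr hmeas measurableSet_Ico haeeq]
    rw [show ι (Set.Ico 0 q') measurableSet_Ico = ιI 0 q' from rfl]
    rw [T_Ico hγ hone hT1 hT2 hq'0 hq'1, hmeasval, ENNReal.toReal_ofReal hq'0]
  · -- compl
    intro t htm ih hs
    rw [ι_compl htm, map_sub, ι_univ hone, hT1, ih htm]
    rw [measure_compl htm (measure_ne_top _ _), μ01_univ]
    rw [ENNReal.toReal_sub_of_le (by rw [← μ01_univ]; exact measure_mono (Set.subset_univ t)) ENNReal.one_ne_top]
    norm_num
  · -- disjoint union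
    intro f hdisj hmeas ih hU
    set A : ℕ → Set ℝ := fun n => ⋃ i ∈ Finset.range n, f i with hAdef
    have hAm : ∀ n, MeasurableSet (A n) := fun n =>
      MeasurableSet.biUnion (Finset.range n).countable_toSet (fun i _ => hmeas i)
    have hAmono : Monotone A := by
      intro m n hmn x hx
      simp only [hAdef, Set.mem_iUnion, Finset.mem_range] at *
      obtain ⟨i, hi, hxi⟩ := hx
      exact ⟨i, lt_of_lt_of_le hi hmn, hxi⟩
    have hAU : (⋃ n, A n) = ⋃ i, f i := by
      ext x
      simp only [hAdef, Set.mem_iUnion, Finset.mem_range]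
      constructor
      · rintro ⟨n, i, hi, hx⟩
        exact ⟨i, hx⟩
      · rintro ⟨i, hx⟩
        exact ⟨i + 1, i, Nat.lt_succ_self i, hx⟩
    have hTA : ∀ n, T (ι (A n) (hAm n)) = ∑ i ∈ Finset.range n, (μ01 (f i)).toReal := by
      intro n
      induction n with
      | zero =>
        have h0 : A 0 = (∅ : Set ℝ) := by simp [hAdef]
        rw [ι_congr (hAm 0) MeasurableSet.empty (by rw [h0]; exact Filter.EventuallyEq.rfl), ι_empty, map_zero]
        simp
      | succ n ihn =>
        have hset : A (n + 1) = A n ∪ f n := by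
          rw [hAdef]
          simp only []
          rw [Finset.range_add_one, Finset.set_biUnion_insert]
          rw [Set.union_comm]
        have hdisj2 : Disjoint (A n) (f n) := by
          rw [hAdef]
          simp only []
          rw [Set.disjoint_left]
          rintro x hx hx'
          simp only [Set.mem_iUnion, Finset.mem_range] at hx
          obtain ⟨i, hi, hxi⟩ := hx
          exact Set.disjoint_left.mp (hdisj (Nat.ne_of_lt hi)) hxi hx'
        rw [ι_congr (hAm (n+1)) ((hAm n).union (hmeas n)) (by rw [hset]; exact Filter.EventuallyEq.rfl),
          ι_union (hAm n) (hmeas n) hdisj2, map_add, ihn, ih n,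
          Finset.sum_range_succ]
    -- convergence of indicators in L1
    have hsymm : ∀ n, μ01 (A n ∆ (⋃ i, f i)) = μ01 (⋃ i, f i) - μ01 (A n) := by
      intro n
      have hsub : A n ⊆ ⋃ i, f i := by
        rw [← hAU]
        exact Set.subset_iUnion A n
      rw [Set.symmDiff_def, Set.diff_eq_empty.mpr hsub, Set.empty_union]
      exact measure_diff hsub (hAm n).nullMeasurableSet (measure_ne_top _ _)
    have hmonoU : Filter.Tendsto (fun n => μ01 (A n)) Filter.atTop (nhds (μ01 (⋃ i, f i))) := by
      have := tendsto_measure_iUnion_atTop (μ := μ01) hAmono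
      rwa [hAU] at this
    have htend0 : Filter.Tendsto (fun n => μ01 (A n ∆ (⋃ i, f i))) Filter.atTop (nhds 0) := by
      simp only [hsymm]
      have := ENNReal.Tendsto.sub (tendsto_const_nhds
        (x := μ01 (⋃ i, f i)) (f := Filter.atTop)) hmonoU (Or.inl (measure_ne_top _ _))
      rwa [tsub_self] at this
    have hLp : Filter.Tendsto (fun n => ι (A n) (hAm n)) Filter.atTop (nhds (ι (⋃ i, f i) hU)) :=
      tendsto_indicatorConstLp_set ENNReal.one_ne_top htend0
    have hlim1 : Filter.Tendsto (fun n => T (ι (A n) (hAm n))) Filter.atTop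
        (nhds (T (ι (⋃ i, f i) hU))) := (T.continuous.tendsto _).comp hLp
    have hlim2 : Filter.Tendsto (fun n => ∑ i ∈ Finset.range n, (μ01 (f i)).toReal)
        Filter.atTop (nhds ((μ01 (⋃ i, f i)).toReal)) := by
      have hsum : Filter.Tendsto (fun n => ∑ i ∈ Finset.range n, μ01 (f i)) Filter.atTop
          (nhds (∑' i, μ01 (f i))) := ENNReal.tendsto_nat_tsum _
      have htsum : (∑' i, μ01 (f i)) = μ01 (⋃ i, f i) := (measure_iUnion hdisj hmeas).symm
      rw [htsum] at hsum
      have := (ENNReal.tendsto_toReal (measure_ne_top μ01 _)).comp hsum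
      convert this using 2 with n
      rw [Function.comp_apply, ENNReal.toReal_sum (fun i _ => measure_ne_top _ _)]
    simp only [hTA] at hlim1
    exact tendsto_nhds_unique hlim1 hlim2

end Aux11
namespace Aux11

variable {γ : L1 → L1 → L1} {one : L1} {T : L1 →L[ℝ] ℝ}

lemma forward (hγ : IsJux γ) (hone : IsOne one) (hT1 : T one = 1)
    (hT2 : ∀ f g : L1, T (γ f g) = (T f + T g) / 2) :
    ∀ f : L1, T f = ∫ x, f x ∂μ01 := by
  have hmeasval := T_meas hγ hone hT1 hT2
  refine Lp.induction (E := ℝ) (μ := μ01) ENNReal.one_ne_top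
    (fun f : L1 => T f = ∫ x, f x ∂μ01) ?_ ?_ ?_
  · intro c s hs hμs
    rw [Lp.simpleFunc.coe_indicatorConst]
    have h1 : indicatorConstLp 1 hs hμs.ne c = c • ι s hs := by
      apply Lp.ext (μ := μ01)
      filter_upwards [Lp.coeFn_smul c (ι s hs),
        (indicatorConstLp_coeFn : ⇑(indicatorConstLp 1 hs hμs.ne c) =ᵐ[μ01] _), ι_coe hs]
        with x e1 e2 e3
      rw [e2, e1, Pi.smul_apply, e3]
      by_cases hx : x ∈ s
      · rw [Set.indicator_of_mem hx, Set.indicator_of_mem hx]; simp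
      · rw [Set.indicator_of_notMem hx, Set.indicator_of_notMem hx]; simp
    have h2 : ∫ x, (indicatorConstLp 1 hs hμs.ne c) x ∂μ01 = (μ01 s).toReal • c := by
      rw [integral_congr_ae indicatorConstLp_coeFn]
      exact integral_indicator_const c hs
    rw [h2, h1, T.map_smul, hmeasval s hs hs]
    simp [smul_eq_mul, mul_comm]
  · intro f g hf hg hdisj hPf hPg
    rw [map_add]
    have : ∫ x, (hf.toLp f + hg.toLp g) x ∂μ01
        = (∫ x, (hf.toLp f) x ∂μ01) + ∫ x, (hg.toLp g) x ∂μ01 := by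
      rw [← integral_add (MeasureTheory.L1.integrable_coeFn _) (MeasureTheory.L1.integrable_coeFn _)]
      exact integral_congr_ae (Lp.coeFn_add _ _)
    rw [this, hPf, hPg]
  · exact isClosed_eq T.continuous continuous_integral

lemma integral_one (hone : IsOne one) : ∫ x, one x ∂μ01 = 1 := by
  rw [integral_congr_ae hone, integral_const, measureReal_def, μ01_univ]
  norm_num

lemma abs_half : |(2:ℝ)⁻¹| = 1/2 := by
  rw [abs_of_pos (by norm_num : (0:ℝ) < 2⁻¹)]
  norm_num

lemma vol_preimage_affine (B : Set ℝ) :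
    volume ((fun x : ℝ => 2 * x - 1) ⁻¹' B) = ENNReal.ofReal (1/2) * volume B := by
  have he : (fun x : ℝ => 2 * x - 1) ⁻¹' B = ((2:ℝ) * ·) ⁻¹' ((fun h : ℝ => h + (-1)) ⁻¹' B) := by
    ext x; simp only [Set.mem_preimage, sub_eq_add_neg]
  rw [he, Real.volume_preimage_mul_left two_ne_zero, measure_preimage_add_right, abs_half]

lemma restrict_Ico01_eq : volume.restrict (Set.Ico (0:ℝ) 1) = μ01 := by
  rw [μ01_def]
  exact Measure.restrict_congr_set Ico_ae_eq_Icc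

lemma map_left : Measure.map (fun x : ℝ => 2 * x) (volume.restrict (Set.Ico 0 (1/2 : ℝ)))
    = ENNReal.ofReal (1/2) • μ01 := by
  rw [← restrict_Ico01_eq]
  ext A hA
  rw [Measure.map_apply (by fun_prop) hA,
    Measure.restrict_apply ((by fun_prop : Measurable fun x : ℝ => 2 * x) hA)]
  have hset : (fun x : ℝ => 2 * x) ⁻¹' A ∩ Set.Ico 0 (1/2)
      = (fun x : ℝ => 2 * x) ⁻¹' (A ∩ Set.Ico 0 1) := by
    ext x
    simp only [Set.mem_inter_iff, Set.mem_preimage, Set.mem_Ico]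
    constructor
    · rintro ⟨h1, h2, h3⟩; exact ⟨h1, by linarith, by linarith⟩
    · rintro ⟨h1, ⟨h2, h3⟩⟩; exact ⟨h1, by linarith, by linarith⟩
  rw [hset, show (fun x : ℝ => 2*x) = ((2:ℝ) * ·) from rfl,
    Real.volume_preimage_mul_left two_ne_zero, abs_half,
    Measure.smul_apply, Measure.restrict_apply hA, smul_eq_mul]

lemma map_right : Measure.map (fun x : ℝ => 2 * x - 1) (volume.restrict (Set.Icc (1/2 : ℝ) 1))
    = ENNReal.ofReal (1/2) • μ01 := by
  rw [μ01_def]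
  ext A hA
  rw [Measure.map_apply (by fun_prop) hA,
    Measure.restrict_apply ((by fun_prop : Measurable fun x : ℝ => 2 * x - 1) hA)]
  have hset : (fun x : ℝ => 2 * x - 1) ⁻¹' A ∩ Set.Icc (1/2) 1
      = (fun x : ℝ => 2 * x - 1) ⁻¹' (A ∩ Set.Icc 0 1) := by
    ext x
    simp only [Set.mem_inter_iff, Set.mem_preimage, Set.mem_Icc]
    constructor
    · rintro ⟨h1, h2, h3⟩; exact ⟨h1, by linarith, by linarith⟩
    · rintro ⟨h1, ⟨h2, h3⟩⟩; exact ⟨h1, by linarith, by linarith⟩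
  rw [hset, vol_preimage_affine, Measure.smul_apply, Measure.restrict_apply hA, smul_eq_mul]

lemma integral_comp_left (f : L1) :
    ∫ x in Set.Ico (0:ℝ) (1/2), f (2 * x) = (1/2) * ∫ x, f x ∂μ01 := by
  have hac : Measure.map (fun x : ℝ => 2 * x) (volume.restrict (Set.Ico 0 (1/2:ℝ))) ≪ μ01 := by
    rw [map_left]
    exact Measure.smul_absolutelyContinuous
  have hsm : AEStronglyMeasurable (⇑f)
      (Measure.map (fun x : ℝ => 2 * x) (volume.restrict (Set.Ico 0 (1/2:ℝ)))) :=
    (Lp.aestronglyMeasurable f).mono_ac hac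
  have hmap := integral_map (μ := volume.restrict (Set.Ico 0 (1/2:ℝ)))
    (φ := fun x : ℝ => 2 * x) (by fun_prop : Measurable fun x : ℝ => 2 * x).aemeasurable hsm
  rw [map_left, integral_smul_measure, ENNReal.toReal_ofReal (by norm_num : (0:ℝ) ≤ 1/2),
    smul_eq_mul] at hmap
  exact hmap.symm

lemma integral_comp_right (f : L1) :
    ∫ x in Set.Icc (1/2:ℝ) 1, f (2 * x - 1) = (1/2) * ∫ x, f x ∂μ01 := by
  have hac : Measure.map (fun x : ℝ => 2 * x - 1) (volume.restrict (Set.Icc (1/2:ℝ) 1)) ≪ μ01 := by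
    rw [map_right]
    exact Measure.smul_absolutelyContinuous
  have hsm : AEStronglyMeasurable (⇑f)
      (Measure.map (fun x : ℝ => 2 * x - 1) (volume.restrict (Set.Icc (1/2:ℝ) 1))) :=
    (Lp.aestronglyMeasurable f).mono_ac hac
  have hmap := integral_map (μ := volume.restrict (Set.Icc (1/2:ℝ) 1))
    (φ := fun x : ℝ => 2 * x - 1) (by fun_prop : Measurable fun x : ℝ => 2 * x - 1).aemeasurable hsm
  rw [map_right, integral_smul_measure, ENNReal.toReal_ofReal (by norm_num : (0:ℝ) ≤ 1/2),
    smul_eq_mul] at hmap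
  exact hmap.symm

lemma μ01_split : μ01 = volume.restrict (Set.Ico 0 (1/2:ℝ)) + volume.restrict (Set.Icc (1/2:ℝ) 1) := by
  have hset : Set.Icc (0:ℝ) 1 = Set.Ico 0 (1/2:ℝ) ∪ Set.Icc (1/2:ℝ) 1 := by
    ext x
    simp only [Set.mem_union, Set.mem_Ico, Set.mem_Icc]
    constructor
    · rintro ⟨h0, h1⟩
      rcases lt_or_ge x (1/2 : ℝ) with h | h
      · exact Or.inl ⟨h0, h⟩
      · exact Or.inr ⟨h, h1⟩
    · rintro (⟨h0, h1⟩ | ⟨h0, h1⟩) <;> constructor <;> linarith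
  rw [μ01_def, hset, Measure.restrict_union
    (Set.disjoint_left.mpr fun x hx hx' => absurd hx'.1 (not_le.mpr hx.2)) measurableSet_Icc]

lemma integral_gamma (hγ : IsJux γ) (f g : L1) :
    ∫ x, (γ f g) x ∂μ01 = ((∫ x, f x ∂μ01) + ∫ x, g x ∂μ01) / 2 := by
  have hint : Integrable (⇑(γ f g)) μ01 := MeasureTheory.L1.integrable_coeFn _
  have hle1 : volume.restrict (Set.Ico (0:ℝ) (1/2)) ≤ μ01 := by
    rw [μ01_def]
    exact Measure.restrict_mono (fun x hx => Set.mem_Icc.mpr ⟨hx.1, by linarith [hx.2]⟩) le_rfl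
  have hle2 : volume.restrict (Set.Icc (1/2:ℝ) 1) ≤ μ01 := by
    rw [μ01_def]
    exact Measure.restrict_mono (fun x hx => Set.mem_Icc.mpr ⟨by linarith [hx.1], hx.2⟩) le_rfl
  have e1 : ∫ x in Set.Ico (0:ℝ) (1/2), (γ f g) x = ∫ x in Set.Ico (0:ℝ) (1/2), f (2 * x) := by
    apply integral_congr_ae
    have h' := ((hγ f g).1).filter_mono (ae_mono hle1)
    filter_upwards [h', ae_restrict_mem measurableSet_Ico] with x hx hmem
    exact hx hmem
  have e2 : ∫ x in Set.Icc (1/2:ℝ) 1, (γ f g) x = ∫ x in Set.Icc (1/2:ℝ) 1, g (2 * x - 1) := by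
    apply integral_congr_ae
    have h' := ((hγ f g).2).filter_mono (ae_mono hle2)
    filter_upwards [h', ae_restrict_mem measurableSet_Icc] with x hx hmem
    exact hx hmem
  have split := integral_add_measure (f := ⇑(γ f g)) (hint.mono_measure hle1) (hint.mono_measure hle2)
  rw [← μ01_split] at split
  rw [split, e1, e2, integral_comp_left, integral_comp_right]
  ring

end Aux11
/-- a continuous linear functional `T` on `L¹([0,1];ℝ)` satisfies
`T 𝟙 = 1` and `T (γ f g) = (T f + T g)/2` iff `T` is the Lebesgue integral; in
particular the Lebesgue integral is the unique such functional. -/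
theorem stmt_11 (γ : L1 → L1 → L1) (hγ : IsJux γ)
    (one : L1) (hone : IsOne one)
    (T : L1 →L[ℝ] ℝ) :
    (T one = 1 ∧ ∀ f g : L1, T (γ f g) = (T f + T g) / 2) ↔
      (∀ f : L1, T f = ∫ x, f x ∂μ01) := by
  constructor
  · rintro ⟨hT1, hT2⟩
    exact Aux11.forward hγ hone hT1 hT2
  · intro hT
    refine ⟨?_, ?_⟩
    · rw [hT one]
      exact Aux11.integral_one hone
    · intro f g
      rw [hT (γ f g), hT f, hT g]
      exact Aux11.integral_gamma hγ f g
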